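/- Let B(t) be a symmetric bilinear form on a free module of finite rank n over k[t] (k a field) whose specialization at generic t is nondegenerate. Define the Jantzen filtration F^j of the specialization V = V(0) by: F^0 V = V, and F^j V = { v(0) : v ∈ V(k[t]), B(t)(v, w) ∈ t^j k[t] for all w ∈ V(k[t]) }. Then the order of vanishing at t = 0 of det B(t) equals Σ_{j ≥ 1} dim_k F^j V. -/

import Mathlib

open Polynomial

universe u

/-- Reduction mod `t`: the specialization at `t = 0` of a vector of polynomials. -/
noncomputable def evalZeroMap (k : Type u) [Field k] (n : ℕ) :
    (Fin n → Polynomial k) →ₗ[k] (Fin n → k) :=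
  LinearMap.pi fun j => (Polynomial.lcoeff k 0).comp (LinearMap.proj j)

/-- The pairing `v ↦ B(t)(v, w) = Σ_{i,l} v_i B_{il} w_l` with a fixed vector `w`. -/
noncomputable def pairingMap (k : Type u) [Field k] (n : ℕ)
    (B : Matrix (Fin n) (Fin n) (Polynomial k)) (w : Fin n → Polynomial k) :
    (Fin n → Polynomial k) →ₗ[k] Polynomial k where
  toFun v := ∑ i, ∑ l, v i * B i l * w l
  map_add' v v' := by
    simp [add_mul, Finset.sum_add_distrib]
  map_smul' c v := by
    simp [Finset.smul_sum, smul_mul_assoc]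

/-- The `j`-th term of the Jantzen filtration of the specialization at `t = 0`:
reductions of lattice vectors pairing into `t^j k[t]` with the whole lattice. -/
noncomputable def jantzenFiltration (k : Type u) [Field k] (n : ℕ)
    (B : Matrix (Fin n) (Fin n) (Polynomial k)) (j : ℕ) : Submodule k (Fin n → k) :=
  Submodule.map (evalZeroMap k n)
    (⨅ w : Fin n → Polynomial k,
      Submodule.comap (pairingMap k n B w)
        ((Ideal.span {(X : Polynomial k) ^ j}).restrictScalars k))

section Aux

variable {k : Type u} [Field k] {n : ℕ}

/-- Any linear map between finite free pi-modules preserves coordinatewise ideal membership. -/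
lemma pi_ideal_stable {m' : ℕ} (g : (Fin n → Polynomial k) →ₗ[Polynomial k] (Fin m' → Polynomial k))
    (I : Ideal (Polynomial k)) {x : Fin n → Polynomial k} (hx : ∀ i, x i ∈ I) :
    ∀ i, g x i ∈ I := by
  classical
  have hxs : x = ∑ l, x l • (Pi.single l (1 : Polynomial k) : Fin n → Polynomial k) := by
    funext j
    simp [Finset.sum_apply, Pi.single_apply]
  intro i
  rw [hxs, map_sum]
  rw [Finset.sum_apply]
  refine Ideal.sum_mem _ fun l _ => ?_
  rw [map_smul]
  exact Ideal.mul_mem_right _ _ (hx l)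

lemma mul_mem_span_X_pow {a u : Polynomial k} (ha : a ≠ 0) (j : ℕ) :
    a * u ∈ Ideal.span {(X : Polynomial k) ^ j} ↔
      u ∈ Ideal.span {(X : Polynomial k) ^ (j - rootMultiplicity 0 a)} := by
  rcases eq_or_ne u 0 with rfl | hu
  · simp
  rw [Ideal.mem_span_singleton, Ideal.mem_span_singleton]
  have h1 : ((X : Polynomial k) - C 0) = X := by simp
  rw [← h1, ← Polynomial.le_rootMultiplicity_iff (mul_ne_zero ha hu),
    ← Polynomial.le_rootMultiplicity_iff hu, Polynomial.rootMultiplicity_mul (mul_ne_zero ha hu)]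
  omega

lemma rootMultiplicity_isUnit {p : Polynomial k} (hp : IsUnit p) (x : k) :
    rootMultiplicity x p = 0 := by
  obtain ⟨r, hr, rfl⟩ := Polynomial.isUnit_iff.mp hp
  refine Polynomial.rootMultiplicity_eq_zero ?_
  simp [Polynomial.IsRoot, hr.ne_zero]

lemma rootMultiplicity_prod {ι : Type*} (s : Finset ι) (f : ι → Polynomial k)
    (hf : ∀ i ∈ s, f i ≠ 0) (x : k) :
    rootMultiplicity x (∏ i ∈ s, f i) = ∑ i ∈ s, rootMultiplicity x (f i) := by
  classical
  induction s using Finset.induction with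
  | empty => simp [rootMultiplicity_isUnit isUnit_one]
  | @insert i s hi ih =>
    rw [Finset.prod_insert hi, Finset.sum_insert hi,
      Polynomial.rootMultiplicity_mul
        (mul_ne_zero (hf i (Finset.mem_insert_self i s))
          (Finset.prod_ne_zero_iff.mpr fun j hj => hf j (Finset.mem_insert_of_mem hj))),
      ih fun j hj => hf j (Finset.mem_insert_of_mem hj)]

lemma coeff_zero_of_mem_span {e : ℕ} (he : e ≠ 0) {u : Polynomial k}
    (hu : u ∈ Ideal.span {(X : Polynomial k) ^ e}) : u.coeff 0 = 0 := by
  obtain ⟨q, rfl⟩ := Ideal.mem_span_singleton.mp hu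
  rw [Polynomial.mul_coeff_zero, Polynomial.coeff_X_pow]
  simp [he, Ne.symm he]

lemma evalZeroMap_apply (v : Fin n → Polynomial k) (i : Fin n) :
    evalZeroMap k n v i = (v i).coeff 0 := rfl

lemma evalZeroMap_surjective : Function.Surjective (evalZeroMap k n) := fun y =>
  ⟨fun i => C (y i), by funext i; simp [evalZeroMap_apply]⟩

/-- The matrix of the specialization at `0` of an `R`-linear endomorphism. -/
noncomputable def specMat (g : (Fin n → Polynomial k) →ₗ[Polynomial k] (Fin n → Polynomial k)) :
    Matrix (Fin n) (Fin n) k :=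
  Matrix.of fun i l => ((g (Pi.single l 1)) i).coeff 0

lemma specMat_mulVec (g : (Fin n → Polynomial k) →ₗ[Polynomial k] (Fin n → Polynomial k))
    (u : Fin n → Polynomial k) :
    (specMat g).mulVec (evalZeroMap k n u) = evalZeroMap k n (g u) := by
  classical
  have hu : g u = ∑ l, u l • g (Pi.single l 1) := by
    conv_lhs => rw [show u = ∑ l, u l • (Pi.single l (1 : Polynomial k) : Fin n → Polynomial k) by
      funext j; simp [Finset.sum_apply, Pi.single_apply]]
    rw [map_sum]
    simp
  funext i
  rw [evalZeroMap_apply, hu]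
  rw [Finset.sum_apply, Polynomial.finset_sum_coeff]
  show ∑ l, specMat g i l * (evalZeroMap k n u) l = _
  refine Finset.sum_congr rfl fun l _ => ?_
  rw [Pi.smul_apply, smul_eq_mul, Polynomial.mul_coeff_zero]
  rw [evalZeroMap_apply, specMat]
  exact mul_comm _ _

lemma mem_inner_iff (B : Matrix (Fin n) (Fin n) (Polynomial k)) (j : ℕ)
    (v : Fin n → Polynomial k) :
    (v ∈ ⨅ w : Fin n → Polynomial k,
      Submodule.comap (pairingMap k n B w)
        ((Ideal.span {(X : Polynomial k) ^ j}).restrictScalars k)) ↔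
      ∀ l, (∑ i, v i * B i l) ∈ Ideal.span {(X : Polynomial k) ^ j} := by
  classical
  rw [Submodule.mem_iInf]
  simp only [Submodule.mem_comap, Submodule.restrictScalars_mem]
  have hp : ∀ w, pairingMap k n B w v = ∑ i, ∑ l, v i * B i l * w l := fun _ => rfl
  constructor
  · intro h l
    have := h (Pi.single l 1)
    rw [hp] at this
    simpa [Pi.single_apply, mul_ite, Finset.sum_ite_eq'] using this
  · intro h w
    rw [hp]
    have key : (∑ i, ∑ l, v i * B i l * w l) = ∑ l, (∑ i, v i * B i l) * w l := by
      rw [Finset.sum_comm]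
      simp [Finset.sum_mul]
    rw [key]
    exact Ideal.sum_mem _ fun l _ => Ideal.mul_mem_right _ _ (h l)

end Aux

theorem jantzen_sum_formula (k : Type u) [Field k] (n : ℕ)
    (B : Matrix (Fin n) (Fin n) (Polynomial k)) (hsymm : B.IsSymm) (hdet : B.det ≠ 0) :
    ((B.det).rootMultiplicity 0 : ℕ∞) =
      ∑' j : ℕ, (Module.finrank k (jantzenFiltration k n B (j + 1)) : ℕ∞) := by
  classical
  set L : (Fin n → Polynomial k) →ₗ[Polynomial k] (Fin n → Polynomial k) :=
    Matrix.mulVecLin B with hLdef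
  have hLinj : Function.Injective L := by
    rw [← LinearMap.ker_eq_bot, LinearMap.ker_eq_bot']
    intro v hv
    have h2 : (B.adjugate * B).mulVec v = 0 := by
      rw [← Matrix.mulVec_mulVec]
      change B.adjugate.mulVec (L v) = 0
      rw [hv, Matrix.mulVec_zero]
    rw [Matrix.adjugate_mul, Matrix.smul_mulVec, Matrix.one_mulVec] at h2
    exact (smul_eq_zero.mp h2).resolve_left hdet
  obtain ⟨n', snf⟩ := (LinearMap.range L).smithNormalForm (Pi.basisFun (Polynomial k) (Fin n))
  have hn : n' = n := by
    have h1 : Module.finrank (Polynomial k) (LinearMap.range L) = n' := by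
      rw [Module.finrank_eq_card_basis snf.bN, Fintype.card_fin]
    have h2 : Module.finrank (Polynomial k) (LinearMap.range L) = n := by
      rw [← (LinearEquiv.ofInjective L hLinj).finrank_eq, Module.finrank_pi, Fintype.card_fin]
    omega
  subst hn
  have hbij : Function.Bijective snf.f :=
    ⟨snf.f.injective, (Finite.injective_iff_bijective.mp snf.f.injective).surjective⟩
  set σ : Fin n' ≃ Fin n' := Equiv.ofBijective snf.f hbij with hσdef
  set b' : Module.Basis (Fin n') (Polynomial k) (Fin n' → Polynomial k) := snf.bM.reindex σ.symm
    with hb'def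
  set E : (Fin n' → Polynomial k) ≃ₗ[Polynomial k] (Fin n' → Polynomial k) := b'.equivFun
    with hEdef
  set c : (Fin n' → Polynomial k) ≃ₗ[Polynomial k] (Fin n' → Polynomial k) :=
    (LinearEquiv.ofInjective L hLinj).trans snf.bN.equivFun with hcdef
  set m : Fin n' → ℕ := fun i => rootMultiplicity 0 (snf.a i) with hmdef
  have hkey : ∀ (v : Fin n' → Polynomial k) (i : Fin n'), E (L v) i = snf.a i * c v i := by
    intro v i
    have hmem : L v ∈ LinearMap.range L := LinearMap.mem_range_self L v
    have h0 : (LinearEquiv.ofInjective L hLinj) v = (⟨L v, hmem⟩ : LinearMap.range L) :=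
      Subtype.ext (by simp [LinearEquiv.ofInjective_apply])
    have h1 : E (L v) i = snf.bM.repr (L v) (snf.f i) := by
      rw [hEdef, Module.Basis.equivFun_apply, hb'def, Module.Basis.repr_reindex_apply, Equiv.symm_symm]
      rfl
    rw [h1, snf.repr_apply_embedding_eq_repr_smul ⟨L v, hmem⟩]
    rw [map_smul, Finsupp.smul_apply, smul_eq_mul, hcdef]
    simp [h0, Module.Basis.equivFun_apply]
  -- determinant factorization
  have hfact : L = (E.symm.toLinearMap ∘ₗ (Matrix.diagonal snf.a).mulVecLin) ∘ₗ
      (c : (Fin n' → Polynomial k) →ₗ[Polynomial k] (Fin n' → Polynomial k)) := by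
    apply LinearMap.ext; intro v
    apply E.injective
    simp only [LinearMap.comp_apply, LinearEquiv.coe_coe, LinearMap.coe_comp,
      LinearEquiv.apply_symm_apply]
    funext i
    rw [hkey v i, Matrix.mulVecLin_apply, Matrix.mulVec_diagonal]
  have hdetL : LinearMap.det L = B.det := by
    have hh : Matrix.toLin' B = L := by
      apply LinearMap.ext; intro v; rw [Matrix.toLin'_apply]; rfl
    rw [← hh, LinearMap.det_toLin']
  have hdiagdet : LinearMap.det (Matrix.diagonal snf.a).mulVecLin = ∏ i, snf.a i := by
    have hh : Matrix.toLin' (Matrix.diagonal snf.a) = (Matrix.diagonal snf.a).mulVecLin := by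
      apply LinearMap.ext; intro v; rw [Matrix.toLin'_apply]; rfl
    rw [← hh, LinearMap.det_toLin', Matrix.det_diagonal]
  have hdet_eq : B.det = LinearMap.det (E.symm.toLinearMap) *
      ((∏ i, snf.a i) * LinearMap.det
        (c : (Fin n' → Polynomial k) →ₗ[Polynomial k] (Fin n' → Polynomial k))) := by
    rw [← hdetL, show LinearMap.det L = LinearMap.det
      ((E.symm.toLinearMap ∘ₗ (Matrix.diagonal snf.a).mulVecLin) ∘ₗ
        (c : (Fin n' → Polynomial k) →ₗ[Polynomial k] (Fin n' → Polynomial k)))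
      from congrArg _ hfact, LinearMap.det_comp, LinearMap.det_comp, hdiagdet, mul_assoc]
  have hu1 : IsUnit (LinearMap.det E.symm.toLinearMap) := E.symm.isUnit_det'
  have hu2 : IsUnit (LinearMap.det
      (c : (Fin n' → Polynomial k) →ₗ[Polynomial k] (Fin n' → Polynomial k))) := c.isUnit_det'
  have hprod_ne : (∏ i, snf.a i) ≠ 0 := by
    intro h0
    apply hdet
    rw [hdet_eq, h0, zero_mul, mul_zero]
  have ha : ∀ i, snf.a i ≠ 0 := fun i => Finset.prod_ne_zero_iff.mp hprod_ne i (Finset.mem_univ i)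
  have hmult : rootMultiplicity 0 B.det = ∑ i, m i := by
    rw [hdet_eq, Polynomial.rootMultiplicity_mul (by rw [← hdet_eq]; exact hdet),
      Polynomial.rootMultiplicity_mul (mul_ne_zero hprod_ne hu2.ne_zero),
      rootMultiplicity_prod Finset.univ snf.a (fun i _ => ha i),
      rootMultiplicity_isUnit hu1, rootMultiplicity_isUnit hu2]
    simp [hmdef]
  -- specialization matrices
  set G : Matrix (Fin n') (Fin n') k :=
    specMat (c.symm : (Fin n' → Polynomial k) →ₗ[Polynomial k] (Fin n' → Polynomial k))
    with hGdef
  set G' : Matrix (Fin n') (Fin n') k :=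
    specMat (c : (Fin n' → Polynomial k) →ₗ[Polynomial k] (Fin n' → Polynomial k)) with hG'def
  have hG : ∀ u, G.mulVec (evalZeroMap k n' u) = evalZeroMap k n' (c.symm u) := fun u => by
    rw [hGdef, specMat_mulVec]; rfl
  have hG' : ∀ u, G'.mulVec (evalZeroMap k n' u) = evalZeroMap k n' (c u) := fun u => by
    rw [hG'def, specMat_mulVec]; rfl
  have hGG' : ∀ y : Fin n' → k, G.mulVec (G'.mulVec y) = y := by
    intro y
    obtain ⟨u, rfl⟩ := evalZeroMap_surjective y
    rw [hG', hG]
    simp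
  have hG'G : ∀ y : Fin n' → k, G'.mulVec (G.mulVec y) = y := by
    intro y
    obtain ⟨u, rfl⟩ := evalZeroMap_surjective y
    rw [hG, hG']
    simp
  set Geq : (Fin n' → k) ≃ₗ[k] (Fin n' → k) :=
    LinearEquiv.ofLinear G.mulVecLin G'.mulVecLin
      (LinearMap.ext fun y => hGG' y) (LinearMap.ext fun y => hG'G y) with hGeqdef
  -- characterization of the inner submodule
  have hchar : ∀ (j : ℕ) (v : Fin n' → Polynomial k),
      (v ∈ ⨅ w : Fin n' → Polynomial k,
        Submodule.comap (pairingMap k n' B w)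
          ((Ideal.span {(X : Polynomial k) ^ j}).restrictScalars k)) ↔
        ∀ i, c v i ∈ Ideal.span {(X : Polynomial k) ^ (j - m i)} := by
    intro j v
    rw [mem_inner_iff]
    have hv : ∀ l, (∑ i, v i * B i l) = L v l := by
      intro l
      have h4 : L v l = ∑ i, B l i * v i := by
        simp [hLdef, Matrix.mulVecLin_apply, Matrix.mulVec, dotProduct]
      rw [h4]
      exact Finset.sum_congr rfl fun i _ => by rw [mul_comm, hsymm.apply i l]
    simp only [hv]
    constructor
    · intro h i
      have h5 : E (L v) i ∈ Ideal.span {(X : Polynomial k) ^ j} := by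
        simpa using pi_ideal_stable
          (E : (Fin n' → Polynomial k) →ₗ[Polynomial k] (Fin n' → Polynomial k)) _ h i
      rw [hkey v i] at h5
      rw [hmdef]
      simpa using (mul_mem_span_X_pow (ha i) j).mp h5
    · intro h l
      have h2 : ∀ i, E (L v) i ∈ Ideal.span {(X : Polynomial k) ^ j} := by
        intro i
        rw [hkey v i, mul_mem_span_X_pow (ha i) j]
        exact h i
      have h3 := pi_ideal_stable
        (E.symm : (Fin n' → Polynomial k) →ₗ[Polynomial k] (Fin n' → Polynomial k)) _ h2 l
      simpa using h3
  -- the filtration as the image of a coordinate span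
  have hfil : ∀ j : ℕ, jantzenFiltration k n' B j =
      Submodule.map (Geq : (Fin n' → k) →ₗ[k] (Fin n' → k))
        (Submodule.span k (Set.range
          (fun i : {i : Fin n' // j ≤ m i} => (Pi.single (i : Fin n') 1 : Fin n' → k)))) := by
    intro j
    ext x
    rw [jantzenFiltration, Submodule.mem_map, Submodule.mem_map]
    constructor
    · rintro ⟨v, hv, rfl⟩
      rw [hchar j v] at hv
      refine ⟨evalZeroMap k n' (c v), ?_, ?_⟩
      · set y := evalZeroMap k n' (c v) with hydef
        have hy : y = ∑ i, Pi.single i (y i) := by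
          funext l
          rw [Finset.sum_apply]
          simp [Pi.single_apply]
        rw [hy]
        refine Submodule.sum_mem _ fun i _ => ?_
        by_cases hi : j ≤ m i
        · have hsingle : (Pi.single i (y i) : Fin n' → k)
              = y i • (Pi.single i (1 : k) : Fin n' → k) := by
            funext l
            by_cases hl : l = i
            · subst hl; simp
            · simp [Pi.single_apply, hl]
          rw [hsingle]
          exact Submodule.smul_mem _ _ (Submodule.subset_span ⟨⟨i, hi⟩, rfl⟩)
        · have hyi : y i = 0 := by
            rw [hydef, evalZeroMap_apply]
            exact coeff_zero_of_mem_span (by omega) (hv i)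
          rw [hyi]
          simp
      · show Geq (evalZeroMap k n' (c v)) = evalZeroMap k n' v
        have : Geq (evalZeroMap k n' (c v)) = G.mulVec (evalZeroMap k n' (c v)) := rfl
        rw [this, hG]
        simp
    · rintro ⟨y, hy, rfl⟩
      have hyZ : ∀ i, ¬ j ≤ m i → y i = 0 := by
        set Z : Submodule k (Fin n' → k) :=
          Submodule.pi Set.univ (fun i => if j ≤ m i then (⊤ : Submodule k k) else ⊥) with hZdef
        have hle : Submodule.span k (Set.range
            (fun i : {i : Fin n' // j ≤ m i} => (Pi.single (i : Fin n') 1 : Fin n' → k))) ≤ Z := by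
          rw [Submodule.span_le]
          rintro _ ⟨i, rfl⟩
          intro l _
          dsimp only
          by_cases hl : l = (i : Fin n')
          · subst hl
            simp [i.2]
          · rw [Pi.single_apply, if_neg hl]
            exact Submodule.zero_mem _
        intro i hi
        have hz := hle hy i (Set.mem_univ i)
        dsimp only at hz
        rw [if_neg hi] at hz
        exact (Submodule.mem_bot k).mp hz
      refine ⟨c.symm (fun i => C (y i)), ?_, ?_⟩
      · rw [hchar]
        intro i
        rw [LinearEquiv.apply_symm_apply]
        by_cases hi : j ≤ m i
        · have h0 : j - m i = 0 := by omega
          rw [h0, pow_zero, Ideal.span_singleton_one]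
          exact Submodule.mem_top
        · rw [hyZ i hi]
          simp
      · show evalZeroMap k n' (c.symm fun i => C (y i)) = Geq y
        have hcoe : (Geq y : Fin n' → k) = G.mulVec y := rfl
        have hey : evalZeroMap k n' (fun i => C (y i)) = y := by
          funext i
          rw [evalZeroMap_apply]
          simp
        rw [hcoe, ← hG, hey]
  -- dimension of each filtration step
  have hindep : ∀ j : ℕ, LinearIndependent k
      (fun i : {i : Fin n' // j ≤ m i} => (Pi.single (i : Fin n') 1 : Fin n' → k)) := by
    intro j
    have h1 := (Pi.basisFun k (Fin n')).linearIndependent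
    have h2 := h1.comp (fun i : {i : Fin n' // j ≤ m i} => (i : Fin n')) Subtype.val_injective
    have h3 : (fun i : {i : Fin n' // j ≤ m i} => (Pi.single (i : Fin n') 1 : Fin n' → k))
        = (⇑(Pi.basisFun k (Fin n')) ∘ fun i : {i : Fin n' // j ≤ m i} => (i : Fin n')) := by
      funext i
      simp [Pi.basisFun_apply]
    rw [h3]
    exact h2
  have hrank : ∀ j : ℕ, Module.finrank k (jantzenFiltration k n' B j) =
      (Finset.univ.filter fun i => j ≤ m i).card := by
    intro j
    rw [hfil j, LinearEquiv.finrank_map_eq, finrank_span_eq_card (hindep j),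
      Fintype.card_subtype]
  -- final counting
  set Ntot := ∑ i, m i with hNdef
  have hvanish : ∀ j : ℕ, j ∉ Finset.range Ntot →
      (Module.finrank k (jantzenFiltration k n' B (j + 1)) : ℕ∞) = 0 := by
    intro j hj
    rw [Finset.mem_range, not_lt] at hj
    have hc : (Finset.univ.filter fun i => (j + 1) ≤ m i) = (∅ : Finset (Fin n')) := by
      rw [Finset.filter_eq_empty_iff]
      intro i _
      have hle : m i ≤ Ntot :=
        Finset.single_le_sum (f := m) (fun _ _ => Nat.zero_le _) (Finset.mem_univ i)
      omega
    rw [hrank, hc, Finset.card_empty, Nat.cast_zero]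
  rw [tsum_eq_sum hvanish, hmult]
  have hcount : ∀ i, (Finset.range Ntot).filter (fun j => (j + 1) ≤ m i)
      = Finset.range (m i) := by
    intro i
    have hle : m i ≤ Ntot :=
      Finset.single_le_sum (f := m) (fun _ _ => Nat.zero_le _) (Finset.mem_univ i)
    ext j
    simp only [Finset.mem_filter, Finset.mem_range]
    omega
  have hnat : ∑ j ∈ Finset.range Ntot, (Finset.univ.filter fun i => (j + 1) ≤ m i).card
      = ∑ i, m i := by
    simp_rw [Finset.card_filter]
    rw [Finset.sum_comm]
    refine Finset.sum_congr rfl fun i _ => ?_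
    rw [← Finset.card_filter, hcount, Finset.card_range]
  have hcast : ∀ j ∈ Finset.range Ntot,
      (Module.finrank k (jantzenFiltration k n' B (j + 1)) : ℕ∞)
        = (((Finset.univ.filter fun i => (j + 1) ≤ m i).card : ℕ) : ℕ∞) := fun j _ => by
    rw [hrank]
  rw [Finset.sum_congr rfl hcast, ← Nat.cast_sum, hnat]
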